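/- arXiv:1305.6042 — 3 statements merged into one kernel-verified Lean document; each statement's English description precedes it below -/
import Mathlib

section
/- For a unit quaternion of the form q = e^{x i} with x ≢ 0 mod π/2, the intersection of the binary dihedral group B with its conjugate q B q⁻¹ equals {±1, ±i} if x ≢ π/4 mod π/2, and equals {±1, ±i, ±j, ±k} if x ≡ π/4 mod π/2; if x ≡ 0 mod π/2 the intersection is all of B. -/
noncomputable section

/-- `e^{xk} = cos x + sin x · k`. -/
def eK (x : ℝ) : Quaternion ℝ := ⟨Real.cos x, 0, 0, Real.sin x⟩

/-- `e^{xi} = cos x + sin x · i`. -/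
def eI (x : ℝ) : Quaternion ℝ := ⟨Real.cos x, Real.sin x, 0, 0⟩

/-- The binary dihedral group `B = {e^{ak}} ∪ {e^{ak}·i}` as a subset of the
quaternions. -/
def Bset : Set (Quaternion ℝ) :=
  {q | ∃ a : ℝ, q = eK a} ∪ {q | ∃ a : ℝ, q = ⟨0, Real.cos a, Real.sin a, 0⟩}

/-- The quaternion group `Q₈ = {±1, ±i, ±j, ±k}`. -/
def Q8set : Set (Quaternion ℝ) :=
  {1, -1, ⟨0,1,0,0⟩, -⟨0,1,0,0⟩, ⟨0,0,1,0⟩, -⟨0,0,1,0⟩, ⟨0,0,0,1⟩, -⟨0,0,0,1⟩}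

open scoped Quaternion

lemma qinj (a b c d e f g h : ℝ) : @Eq (Quaternion ℝ) ⟨a,b,c,d⟩ ⟨e,f,g,h⟩ =
    (a = e ∧ b = f ∧ c = g ∧ d = h) :=
  QuaternionAlgebra.mk.injEq _ _ _ _ _ _ _ _

lemma qmem_insert (a b c d e f g h : ℝ) (s : Set (Quaternion ℝ)) :
    (@Membership.mem (Quaternion ℝ) (Set (Quaternion ℝ)) _ (insert ⟨e,f,g,h⟩ s) ⟨a,b,c,d⟩) ↔
    (a = e ∧ b = f ∧ c = g ∧ d = h) ∨ @Membership.mem (Quaternion ℝ) (Set (Quaternion ℝ)) _ s ⟨a,b,c,d⟩ :=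
  Set.mem_insert_iff.trans (by rw [qinj])

lemma qmem_singleton (a b c d e f g h : ℝ) :
    (@Membership.mem (Quaternion ℝ) (Set (Quaternion ℝ)) _ {⟨e,f,g,h⟩} ⟨a,b,c,d⟩) ↔
    (a = e ∧ b = f ∧ c = g ∧ d = h) :=
  Set.mem_singleton_iff.trans (by rw [qinj])

lemma qmem_insert' (q : Quaternion ℝ) (e f g h : ℝ) (s : Set (Quaternion ℝ)) :
    (@Membership.mem (Quaternion ℝ) (Set (Quaternion ℝ)) _ (insert ⟨e,f,g,h⟩ s) q) ↔
    @Eq (Quaternion ℝ) q ⟨e,f,g,h⟩ ∨ @Membership.mem (Quaternion ℝ) (Set (Quaternion ℝ)) _ s q :=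
  Set.mem_insert_iff

lemma qmem_singleton' (q : Quaternion ℝ) (e f g h : ℝ) :
    (@Membership.mem (Quaternion ℝ) (Set (Quaternion ℝ)) _ {⟨e,f,g,h⟩} q) ↔
    @Eq (Quaternion ℝ) q ⟨e,f,g,h⟩ :=
  Set.mem_singleton_iff

def B2 (a : ℝ) : Quaternion ℝ := ⟨0, Real.cos a, Real.sin a, 0⟩

lemma one_mk : (1 : Quaternion ℝ) = ⟨1,0,0,0⟩ := rfl

lemma negone_mk : (-1 : Quaternion ℝ) = ⟨-1,0,0,0⟩ := by ext <;> simp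

lemma negi_mk : -(⟨0,1,0,0⟩ : Quaternion ℝ) = ⟨0,-1,0,0⟩ := by ext <;> simp

lemma negj_mk : -(⟨0,0,1,0⟩ : Quaternion ℝ) = ⟨0,0,-1,0⟩ := by ext <;> simp

lemma negk_mk : -(⟨0,0,0,1⟩ : Quaternion ℝ) = ⟨0,0,0,-1⟩ := by ext <;> simp

lemma Q8_mk : Q8set = ({⟨1,0,0,0⟩, ⟨-1,0,0,0⟩, ⟨0,1,0,0⟩, ⟨0,-1,0,0⟩,
    ⟨0,0,1,0⟩, ⟨0,0,-1,0⟩, ⟨0,0,0,1⟩, ⟨0,0,0,-1⟩} : Set (Quaternion ℝ)) := by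
  erw [Q8set, negone_mk, negi_mk, negj_mk, negk_mk, one_mk]

lemma T_mk : ({1, -1, ⟨0,1,0,0⟩, -⟨0,1,0,0⟩} : Set (Quaternion ℝ)) =
    ({⟨1,0,0,0⟩, ⟨-1,0,0,0⟩, ⟨0,1,0,0⟩, ⟨0,-1,0,0⟩} : Set (Quaternion ℝ)) := by
  erw [negone_mk, negi_mk, one_mk]

lemma eI_inv (x : ℝ) : (eI x)⁻¹ = ⟨Real.cos x, -Real.sin x, 0, 0⟩ := by
  refine inv_eq_of_mul_eq_one_right ?_
  have h := Real.sin_sq_add_cos_sq x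
  ext
  · erw [Quaternion.re_mul]; simp [eI] <;> nlinarith [h]
  · erw [Quaternion.imI_mul]; simp [eI] <;> nlinarith [h]
  · erw [Quaternion.imJ_mul]; simp [eI] <;> nlinarith [h]
  · erw [Quaternion.imK_mul]; simp [eI] <;> nlinarith [h]

lemma conjA (x a : ℝ) : eI x * eK a * (eI x)⁻¹ =
    ⟨Real.cos a, 0, -(Real.sin a * Real.sin (2*x)), Real.sin a * Real.cos (2*x)⟩ := by
  rw [eI_inv]
  have h := Real.sin_sq_add_cos_sq x
  refine QuaternionAlgebra.ext ?_ ?_ ?_ ?_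
  · erw [Quaternion.re_mul]; simp only [Quaternion.re_mul, Quaternion.imI_mul, Quaternion.imJ_mul, Quaternion.imK_mul]; simp [eI, eK]; linear_combination Real.cos a * h
  · erw [Quaternion.imI_mul]; simp only [Quaternion.re_mul, Quaternion.imI_mul, Quaternion.imJ_mul, Quaternion.imK_mul]; simp [eI, eK]; ring
  · erw [Quaternion.imJ_mul]; simp only [Quaternion.re_mul, Quaternion.imI_mul, Quaternion.imJ_mul, Quaternion.imK_mul]; simp [eI, eK, Real.sin_two_mul]; ring
  · erw [Quaternion.imK_mul]; simp only [Quaternion.re_mul, Quaternion.imI_mul, Quaternion.imJ_mul, Quaternion.imK_mul]; simp [eI, eK, Real.cos_two_mul]; linear_combination (-(Real.sin a)) * h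

lemma conjB (x a : ℝ) : eI x * B2 a * (eI x)⁻¹ =
    ⟨0, Real.cos a, Real.sin a * Real.cos (2*x), Real.sin a * Real.sin (2*x)⟩ := by
  rw [eI_inv]
  have h := Real.sin_sq_add_cos_sq x
  refine QuaternionAlgebra.ext ?_ ?_ ?_ ?_
  · erw [Quaternion.re_mul]; simp only [Quaternion.re_mul, Quaternion.imI_mul, Quaternion.imJ_mul, Quaternion.imK_mul]; simp [eI, B2]; ring
  · erw [Quaternion.imI_mul]; simp only [Quaternion.re_mul, Quaternion.imI_mul, Quaternion.imJ_mul, Quaternion.imK_mul]; simp [eI, B2]; linear_combination Real.cos a * h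
  · erw [Quaternion.imJ_mul]; simp only [Quaternion.re_mul, Quaternion.imI_mul, Quaternion.imJ_mul, Quaternion.imK_mul]; simp [eI, B2, Real.cos_two_mul]; linear_combination (-(Real.sin a)) * h
  · erw [Quaternion.imK_mul]; simp only [Quaternion.re_mul, Quaternion.imI_mul, Quaternion.imJ_mul, Quaternion.imK_mul]; simp [eI, B2, Real.sin_two_mul]; ring

lemma mem_inter_iff (x : ℝ) (q : Quaternion ℝ) :
    q ∈ Bset ∩ ((fun q => eI x * q * (eI x)⁻¹) '' Bset) ↔
    ((∃ a, q = eK a) ∨ (∃ a, q = B2 a)) ∧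
    ((∃ b, q = (⟨Real.cos b, 0, -(Real.sin b * Real.sin (2*x)),
        Real.sin b * Real.cos (2*x)⟩ : Quaternion ℝ)) ∨
     (∃ b, q = (⟨0, Real.cos b, Real.sin b * Real.cos (2*x),
        Real.sin b * Real.sin (2*x)⟩ : Quaternion ℝ))) := by
  constructor
  · rintro ⟨h1, ⟨p, hp, rfl⟩⟩
    refine ⟨?_, ?_⟩
    · rcases h1 with ⟨a, ha⟩ | ⟨a, ha⟩
      · exact Or.inl ⟨a, ha⟩
      · exact Or.inr ⟨a, ha⟩
    · rcases hp with ⟨b, rfl⟩ | ⟨b, rfl⟩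
      · exact Or.inl ⟨b, by dsimp only; rw [conjA]⟩
      · exact Or.inr ⟨b, by dsimp only; rw [show (⟨0, Real.cos b, Real.sin b, 0⟩ : Quaternion ℝ) = B2 b from rfl, conjB]⟩
  · rintro ⟨h1, h2⟩
    refine ⟨?_, ?_⟩
    · rcases h1 with ⟨a, ha⟩ | ⟨a, ha⟩
      · exact Or.inl ⟨a, ha⟩
      · exact Or.inr ⟨a, ha⟩
    · rcases h2 with ⟨b, rfl⟩ | ⟨b, rfl⟩
      · exact ⟨eK b, Or.inl ⟨b, rfl⟩, conjA x b⟩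
      · exact ⟨B2 b, Or.inr ⟨b, rfl⟩, conjB x b⟩

lemma sin_pm_one_of_cos_eq_zero (a : ℝ) (h : Real.cos a = 0) :
    Real.sin a = 1 ∨ Real.sin a = -1 :=
  sq_eq_one_iff.mp (by nlinarith [Real.sin_sq_add_cos_sq a])

lemma cos_pm_one_of_sin_eq_zero (a : ℝ) (h : Real.sin a = 0) :
    Real.cos a = 1 ∨ Real.cos a = -1 :=
  sq_eq_one_iff.mp (by nlinarith [Real.sin_sq_add_cos_sq a])

/-- Computation of `B ∩ e^{xi} B e^{-xi}` in the three cases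
`x ≡ 0 mod π/2`, `x ≡ π/4 mod π/2`, and otherwise. -/
theorem binaryDihedral_inter_conj (x : ℝ) :
    ((∃ n : ℤ, x = n * (Real.pi / 2)) →
      Bset ∩ ((fun q => eI x * q * (eI x)⁻¹) '' Bset) = Bset) ∧
    ((∃ n : ℤ, x = Real.pi / 4 + n * (Real.pi / 2)) →
      Bset ∩ ((fun q => eI x * q * (eI x)⁻¹) '' Bset) = Q8set) ∧
    ((¬ ∃ n : ℤ, x = n * (Real.pi / 2)) →
     (¬ ∃ n : ℤ, x = Real.pi / 4 + n * (Real.pi / 2)) →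
      Bset ∩ ((fun q => eI x * q * (eI x)⁻¹) '' Bset) =
        {1, -1, ⟨0,1,0,0⟩, -⟨0,1,0,0⟩}) := by
  refine ⟨?_, ?_, ?_⟩
  · -- case x = n * π/2
    rintro ⟨n, rfl⟩
    have hs : Real.sin (2 * ((n : ℝ) * (Real.pi / 2))) = 0 := by
      rw [show (2 : ℝ) * ((n : ℝ) * (Real.pi / 2)) = (n : ℝ) * Real.pi by ring]
      exact Real.sin_int_mul_pi n
    have hc : Real.cos (2 * ((n : ℝ) * (Real.pi / 2))) = 1 ∨
        Real.cos (2 * ((n : ℝ) * (Real.pi / 2))) = -1 :=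
      cos_pm_one_of_sin_eq_zero _ hs
    refine Set.inter_eq_left.mpr ?_
    intro q hq
    rcases hq with ⟨a, rfl⟩ | ⟨a, rfl⟩
    · rcases hc with hc | hc
      · exact ⟨eK a, Or.inl ⟨a, rfl⟩, by dsimp only; rw [conjA, hs, hc]; rw [eK]; norm_num [qinj]⟩
      · exact ⟨eK (-a), Or.inl ⟨-a, rfl⟩, by dsimp only; rw [conjA, hs, hc]; rw [eK]; norm_num [qinj]⟩
    · rcases hc with hc | hc
      · exact ⟨B2 a, Or.inr ⟨a, rfl⟩, by dsimp only; rw [conjB, hs, hc]; norm_num [qinj]⟩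
      · exact ⟨B2 (-a), Or.inr ⟨-a, rfl⟩, by dsimp only; rw [conjB, hs, hc]; norm_num [qinj]⟩
  · -- case x = π/4 + n * π/2
    rintro ⟨n, rfl⟩
    set x := Real.pi / 4 + (n : ℝ) * (Real.pi / 2) with hx
    have hc : Real.cos (2 * x) = 0 := by
      refine Real.cos_eq_zero_iff.mpr ⟨n, ?_⟩
      rw [hx]; ring
    have hs : Real.sin (2 * x) = 1 ∨ Real.sin (2 * x) = -1 :=
      sin_pm_one_of_cos_eq_zero _ hc
    ext q
    rw [mem_inter_iff, Q8_mk]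
    constructor
    · rintro ⟨⟨a, rfl⟩ | ⟨a, rfl⟩, ⟨b, hb⟩ | ⟨b, hb⟩⟩
      · -- eK a = A' b : q = ±1
        rw [eK, qinj] at hb
        obtain ⟨h1, -, -, h4⟩ := hb
        rw [hc, mul_zero] at h4
        rcases cos_pm_one_of_sin_eq_zero a h4 with h | h <;>
          simp [eK, Set.mem_insert_iff, Set.mem_singleton_iff,
            qinj, qmem_insert, qmem_singleton, h4, h]
      · -- eK a = B' b : q = ±k
        rw [eK, qinj] at hb
        obtain ⟨h1, -, -, -⟩ := hb
        rcases sin_pm_one_of_cos_eq_zero a h1 with h | h <;>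
          simp [eK, Set.mem_insert_iff, Set.mem_singleton_iff,
            qinj, qmem_insert, qmem_singleton, h1, h]
      · -- B2 a = A' b : q = ±j
        rw [B2, qinj] at hb
        obtain ⟨h1, h2, -, -⟩ := hb
        rcases sin_pm_one_of_cos_eq_zero a h2 with h | h <;>
          simp [B2, Set.mem_insert_iff, Set.mem_singleton_iff,
            qinj, qmem_insert, qmem_singleton, h2, h]
      · -- B2 a = B' b : q = ±i
        rw [B2, qinj] at hb
        obtain ⟨-, -, h3, h4⟩ := hb
        have hsb : Real.sin b = 0 := by
          rcases hs with h | h <;> rw [h] at h4 <;> simpa using h4.symm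
        rw [hsb, zero_mul] at h3
        rcases cos_pm_one_of_sin_eq_zero a h3 with h | h <;>
          simp [B2, Set.mem_insert_iff, Set.mem_singleton_iff,
            qinj, qmem_insert, qmem_singleton, h3, h]
    · intro hq
      simp only [qmem_insert', qmem_singleton'] at hq
      rcases hq with rfl | rfl | rfl | rfl | rfl | rfl | rfl | rfl
      · exact ⟨Or.inl ⟨0, by rw [eK]; norm_num [qinj]⟩,
          Or.inl ⟨0, by norm_num [qinj]⟩⟩
      · exact ⟨Or.inl ⟨Real.pi, by rw [eK]; norm_num [qinj]⟩,
          Or.inl ⟨Real.pi, by norm_num [qinj]⟩⟩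
      · exact ⟨Or.inr ⟨0, by rw [B2]; norm_num [qinj]⟩, Or.inr ⟨0, by norm_num [qinj]⟩⟩
      · exact ⟨Or.inr ⟨Real.pi, by rw [B2]; norm_num [qinj]⟩,
          Or.inr ⟨Real.pi, by norm_num [qinj]⟩⟩
      · -- j
        refine ⟨Or.inr ⟨Real.pi/2, by rw [B2]; norm_num [qinj]⟩, Or.inl ?_⟩
        rcases hs with h | h
        · exact ⟨-(Real.pi/2), by rw [h, hc]; norm_num [qinj]⟩
        · exact ⟨Real.pi/2, by rw [h, hc]; norm_num [qinj]⟩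
      · -- -j
        refine ⟨Or.inr ⟨-(Real.pi/2), by rw [B2]; norm_num [qinj]⟩, Or.inl ?_⟩
        rcases hs with h | h
        · exact ⟨Real.pi/2, by rw [h, hc]; norm_num [qinj]⟩
        · exact ⟨-(Real.pi/2), by rw [h, hc]; norm_num [qinj]⟩
      · -- k
        refine ⟨Or.inl ⟨Real.pi/2, by rw [eK]; norm_num [qinj]⟩, Or.inr ?_⟩
        rcases hs with h | h
        · exact ⟨Real.pi/2, by rw [h, hc]; norm_num [qinj]⟩
        · exact ⟨-(Real.pi/2), by rw [h, hc]; norm_num [qinj]⟩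
      · -- -k
        refine ⟨Or.inl ⟨-(Real.pi/2), by rw [eK]; norm_num [qinj]⟩, Or.inr ?_⟩
        rcases hs with h | h
        · exact ⟨-(Real.pi/2), by rw [h, hc]; norm_num [qinj]⟩
        · exact ⟨Real.pi/2, by rw [h, hc]; norm_num [qinj]⟩
  · -- generic case
    intro h1 h2
    have hs : Real.sin (2 * x) ≠ 0 := by
      intro h
      obtain ⟨n, hn⟩ := Real.sin_eq_zero_iff.mp h
      exact h1 ⟨n, by linarith⟩
    have hc : Real.cos (2 * x) ≠ 0 := by
      intro h
      obtain ⟨k, hk⟩ := Real.cos_eq_zero_iff.mp h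
      refine h2 ⟨k, ?_⟩
      have hk' : 2 * x = (2 * (k : ℝ) + 1) * Real.pi / 2 := hk
      linarith
    ext q
    rw [mem_inter_iff, T_mk]
    constructor
    · rintro ⟨⟨a, rfl⟩ | ⟨a, rfl⟩, ⟨b, hb⟩ | ⟨b, hb⟩⟩
      · -- eK a = A' b : q = ±1
        rw [eK, qinj] at hb
        obtain ⟨h1, -, h3, h4⟩ := hb
        have hsb : Real.sin b = 0 := by
          rcases mul_eq_zero.mp (neg_eq_zero.mp h3.symm) with h | h
          · exact h
          · exact absurd h hs
        rw [hsb, zero_mul] at h4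
        rcases cos_pm_one_of_sin_eq_zero a h4 with h | h <;>
          simp [eK, Set.mem_insert_iff, Set.mem_singleton_iff,
            qinj, qmem_insert, qmem_singleton, h4, h]
      · -- eK a = B' b : impossible
        rw [eK, qinj] at hb
        obtain ⟨-, hb2, h3, -⟩ := hb
        rcases sin_pm_one_of_cos_eq_zero b hb2.symm with h | h <;>
          rw [h] at h3 <;> exact absurd (by linarith : Real.cos (2*x) = 0) hc
      · -- B2 a = A' b : impossible
        rw [B2, qinj] at hb
        obtain ⟨hb1, -, -, h4⟩ := hb
        rcases sin_pm_one_of_cos_eq_zero b hb1.symm with h | h <;>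
          rw [h] at h4 <;> exact absurd (by linarith : Real.cos (2*x) = 0) hc
      · -- B2 a = B' b : q = ±i
        rw [B2, qinj] at hb
        obtain ⟨-, -, h3, h4⟩ := hb
        have hsb : Real.sin b = 0 := by
          rcases mul_eq_zero.mp h4.symm with h | h
          · exact h
          · exact absurd h hs
        rw [hsb, zero_mul] at h3
        rcases cos_pm_one_of_sin_eq_zero a h3 with h | h <;>
          simp [B2, Set.mem_insert_iff, Set.mem_singleton_iff,
            qinj, qmem_insert, qmem_singleton, h3, h]
    · intro hq
      simp only [qmem_insert', qmem_singleton'] at hq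
      rcases hq with rfl | rfl | rfl | rfl
      · exact ⟨Or.inl ⟨0, by rw [eK]; norm_num [qinj]⟩, Or.inl ⟨0, by norm_num [qinj]⟩⟩
      · exact ⟨Or.inl ⟨Real.pi, by rw [eK]; norm_num [qinj]⟩,
          Or.inl ⟨Real.pi, by norm_num [qinj]⟩⟩
      · exact ⟨Or.inr ⟨0, by rw [B2]; norm_num [qinj]⟩, Or.inr ⟨0, by norm_num [qinj]⟩⟩
      · exact ⟨Or.inr ⟨Real.pi, by rw [B2]; norm_num [qinj]⟩,
          Or.inr ⟨Real.pi, by norm_num [qinj]⟩⟩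

end
end

section
/- Let G be a group, let α : G → ℤ be a homomorphism, let H = ker(ᾱ) where ᾱ is the mod-2 reduction of α, and fix a ∈ G with α(a) = 1. Suppose ℓ : H → S¹ is a homomorphism satisfying ℓ(a β a⁻¹) = ℓ(β)⁻¹ for all β ∈ H. Then the map ρ_ℓ : G → unit quaternions defined by ρ_ℓ(β) = i^{α(β)} · ℓ(a^{−α(β)} β) (viewing S¹ as {e^{x k}}) is a group homomorphism. -/
noncomputable section

/-- The embedding of the circle `S¹ ⊆ ℂ` onto the maximal torus `{e^{xk}}` of
the quaternions, sending `e^{ix}` to `e^{xk}`. -/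
def toQk (z : ℂ) : Quaternion ℝ := ⟨z.re, 0, 0, z.im⟩

/-- The quaternion `i`. -/
def qi : Quaternion ℝ := ⟨0, 1, 0, 0⟩

lemma toQk_mul (z w : ℂ) : toQk (z * w) = toQk z * toQk w := by
  ext <;> simp only [Quaternion.re_mul, Quaternion.imI_mul, Quaternion.imJ_mul, Quaternion.imK_mul] <;> simp [toQk]

lemma qi_sq : qi * qi = -1 := by
  ext <;> simp only [Quaternion.re_mul, Quaternion.imI_mul, Quaternion.imJ_mul, Quaternion.imK_mul, Quaternion.re_neg, Quaternion.imI_neg, Quaternion.imJ_neg, Quaternion.imK_neg, Quaternion.re_one, Quaternion.imI_one, Quaternion.imJ_one, Quaternion.imK_one] <;> simp [qi]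

lemma qi_ne : qi ≠ 0 := by
  intro h; have := congrArg QuaternionAlgebra.imI h; simp [qi] at this; exact one_ne_zero this

lemma qi_inv : qi⁻¹ = -qi := by
  apply inv_eq_of_mul_eq_one_right
  rw [mul_neg, qi_sq, neg_neg]

lemma qi_mul_toQk (z : ℂ) : qi * toQk z = toQk (starRingEnd ℂ z) * qi := by
  ext <;> simp only [Quaternion.re_mul, Quaternion.imI_mul, Quaternion.imJ_mul, Quaternion.imK_mul] <;> simp [toQk, qi]

lemma qi_inv_mul_toQk (z : ℂ) : qi⁻¹ * toQk z = toQk (starRingEnd ℂ z) * qi⁻¹ := by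
  simp only [qi_inv, neg_mul, mul_neg, qi_mul_toQk]

lemma qi_zpow_mul_toQk (n : ℤ) (z : ℂ) :
    qi ^ n * toQk z = toQk (if Even n then z else starRingEnd ℂ z) * qi ^ n := by
  induction n using Int.induction_on generalizing z with
  | zero => simp
  | succ k ih =>
      rw [zpow_add_one₀ qi_ne, mul_assoc, qi_mul_toQk, ← mul_assoc,
        ih ((starRingEnd ℂ) z)]
      rcases Int.even_or_odd k with h | h
      · simp [h, Int.even_add_one, mul_assoc, Nat.not_odd_iff_even.mpr (by simpa using h : Even k)]
      · simp [Int.even_add_one, Int.not_even_iff_odd.mpr h, mul_assoc, (by simpa using h : Odd k)]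
  | pred k ih =>
      rw [zpow_sub_one₀ qi_ne, mul_assoc, qi_inv_mul_toQk, ← mul_assoc,
        ih ((starRingEnd ℂ) z)]
      rcases Int.even_or_odd (-k : ℤ) with h | h
      · simp [h, Int.even_sub_one, mul_assoc, (even_neg.mp h), Nat.not_odd_iff_even.mpr (by simpa using h : Even k)]
      · have h2 : ¬ Even (-k : ℤ) := Int.not_even_iff_odd.mpr h
        have h3 : ¬ Even (k : ℤ) := fun hk => h2 hk.neg
        simp [h3, Int.even_sub_one, mul_assoc, (by simpa using h : Odd k)]

/-- Let `G` be a group, `α : G → ℤ` a homomorphism, `H = ker(ᾱ)` the kernel of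
its mod-2 reduction, and `a ∈ G` with `α(a) = 1`.  If `ℓ : H → S¹` is a
homomorphism with `ℓ(aβa⁻¹) = ℓ(β)⁻¹` for `β ∈ H`, then
`ρ_ℓ(β) = i^{α(β)} · ℓ(a^{-α(β)}β)` defines a group homomorphism from `G` to the
unit quaternions.  (Here `ℓ` is presented as a circle-valued function on `G`
whose relevant properties hold on `H = {β | α β is even}`.) -/
theorem rho_ell_is_homomorphism (G : Type*) [Group G]
    (α : G → ℤ) (hα : ∀ g h : G, α (g * h) = α g + α h)
    (a : G) (ha : α a = 1)
    (ℓ : G → ℂ)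
    (hnorm : ∀ β : G, Even (α β) → ‖ℓ β‖ = 1)
    (hmul : ∀ β₁ β₂ : G, Even (α β₁) → Even (α β₂) →
      ℓ (β₁ * β₂) = ℓ β₁ * ℓ β₂)
    (hconj : ∀ β : G, Even (α β) → ℓ (a * β * a⁻¹) = (ℓ β)⁻¹) :
    ∀ β₁ β₂ : G,
      qi ^ (α (β₁ * β₂)) * toQk (ℓ (a ^ (-(α (β₁ * β₂))) * (β₁ * β₂))) =
      (qi ^ (α β₁) * toQk (ℓ (a ^ (-(α β₁)) * β₁))) *
      (qi ^ (α β₂) * toQk (ℓ (a ^ (-(α β₂)) * β₂))) := by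
  -- basic facts about α
  have hα1 : α 1 = 0 := by have := hα 1 1; simpa using this.symm
  have hαinv : ∀ g : G, α g⁻¹ = -α g := by
    intro g
    have := hα g g⁻¹
    simp [hα1] at this
    omega
  have hαzpow : ∀ n : ℤ, α (a ^ n) = n := by
    intro n
    induction n using Int.induction_on with
    | zero => simpa using hα1
    | succ k ih => rw [zpow_add_one, hα, ih, ha]
    | pred k ih => rw [zpow_sub_one, hα, ih, hαinv, ha]; omega
  -- conjugation by a⁻¹
  have hconj' : ∀ β : G, Even (α β) → ℓ (a⁻¹ * β * a) = (ℓ β)⁻¹ := by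
    intro β hβ
    have heq : a * (a⁻¹ * β * a) * a⁻¹ = β := by group
    have hev : Even (α (a⁻¹ * β * a)) := by
      have : α (a⁻¹ * β * a) = α β := by rw [hα, hα, hαinv, ha]; omega
      rwa [this]
    have := hconj _ hev
    rw [heq] at this
    rw [this, inv_inv]
  -- iterated conjugation
  have hconjpow : ∀ (n : ℤ) (x : G), Even (α x) →
      ℓ (a ^ n * x * a ^ (-n)) = if Even n then ℓ x else (ℓ x)⁻¹ := by
    intro n x hx
    induction n using Int.induction_on with
    | zero => simp
    | succ k ih =>
        have heq : a ^ (k + 1 : ℤ) * x * a ^ (-(k + 1 : ℤ)) =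
            a * (a ^ (k : ℤ) * x * a ^ (-(k : ℤ))) * a⁻¹ := by group
        have hev : Even (α (a ^ (k : ℤ) * x * a ^ (-(k : ℤ)))) := by
          have : α (a ^ (k : ℤ) * x * a ^ (-(k : ℤ))) = α x := by
            rw [hα, hα, hαzpow, hαzpow]; omega
          rwa [this]
        rw [heq, hconj _ hev, ih]
        rcases Int.even_or_odd (k : ℤ) with h | h
        · simp [h, Int.even_add_one, Int.not_even_iff_odd, Nat.not_odd_iff_even.mpr (by simpa using h : Even k)]
        · simp [Int.not_even_iff_odd.mpr h, Int.even_add_one, Nat.not_even_iff_odd.mpr (by simpa using h : Odd k)]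
    | pred k ih =>
        have heq : a ^ (-k - 1 : ℤ) * x * a ^ (-(-k - 1 : ℤ)) =
            a⁻¹ * (a ^ (-k : ℤ) * x * a ^ (-(-k : ℤ))) * a := by group
        have hev : Even (α (a ^ (-k : ℤ) * x * a ^ (-(-k : ℤ)))) := by
          have : α (a ^ (-k : ℤ) * x * a ^ (-(-k : ℤ))) = α x := by
            rw [hα, hα, hαzpow, hαzpow]; omega
          rwa [this]
        rw [heq, hconj' _ hev, ih]
        rcases Int.even_or_odd (-k : ℤ) with h | h
        · simp [h, Int.even_sub_one, Int.not_even_iff_odd, Nat.not_odd_iff_even.mpr (by simpa using h : Even k)]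
        · have h2 : ¬ Even (-k : ℤ) := Int.not_even_iff_odd.mpr h
          simp [h2, Int.even_sub_one, Nat.not_even_iff_odd.mpr (by simpa using h : Odd k)]
  -- main computation
  intro β₁ β₂
  set n₁ := α β₁ with hn₁
  set n₂ := α β₂ with hn₂
  set x₁ := a ^ (-n₁) * β₁ with hx₁def
  set x₂ := a ^ (-n₂) * β₂ with hx₂def
  have hαx₁ : α x₁ = 0 := by rw [hx₁def, hα, hαzpow]; omega
  have hαx₂ : α x₂ = 0 := by rw [hx₂def, hα, hαzpow]; omega
  have hex₁ : Even (α x₁) := by rw [hαx₁]; exact Even.zero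
  have hex₂ : Even (α x₂) := by rw [hαx₂]; exact Even.zero
  set y := a ^ (-n₂) * x₁ * a ^ (-(-n₂)) with hydef
  have hαy : α y = 0 := by rw [hydef, hα, hα, hαzpow, hαzpow]; omega
  have hey : Even (α y) := by rw [hαy]; exact Even.zero
  have hword : a ^ (-(α (β₁ * β₂))) * (β₁ * β₂) = y * x₂ := by
    rw [hα β₁ β₂, hydef, hx₁def, hx₂def, ← hn₁, ← hn₂]
    group
  have hℓy : ℓ y = if Even (-n₂) then ℓ x₁ else (ℓ x₁)⁻¹ :=
    hconjpow (-n₂) x₁ hex₁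
  have hstar : (ℓ x₁)⁻¹ = starRingEnd ℂ (ℓ x₁) :=
    Complex.inv_eq_conj (hnorm x₁ hex₁)
  have key : (if Even n₂ then ℓ y else starRingEnd ℂ (ℓ y)) = ℓ x₁ := by
    rcases Int.even_or_odd n₂ with h | h
    · simp [h, hℓy, h.neg]
    · have h2 : ¬ Even n₂ := Int.not_even_iff_odd.mpr h
      have h3 : ¬ Even (-n₂) := fun hk => h2 (by simpa using hk.neg)
      simp [h2, h3, hℓy, hstar]
  calc qi ^ (α (β₁ * β₂)) * toQk (ℓ (a ^ (-(α (β₁ * β₂))) * (β₁ * β₂)))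
      = qi ^ n₁ * (qi ^ n₂ * (toQk (ℓ y) * toQk (ℓ x₂))) := by
        rw [hword, hα β₁ β₂, ← hn₁, ← hn₂, zpow_add₀ qi_ne,
          hmul y x₂ hey hex₂, toQk_mul]
        simp [mul_assoc]
    _ = qi ^ n₁ * (toQk (ℓ x₁) * (qi ^ n₂ * toQk (ℓ x₂))) := by
        rw [← mul_assoc (qi ^ n₂), qi_zpow_mul_toQk, key]
        simp [mul_assoc]
    _ = (qi ^ (α β₁) * toQk (ℓ (a ^ (-(α β₁)) * β₁))) *
        (qi ^ (α β₂) * toQk (ℓ (a ^ (-(α β₂)) * β₂))) := by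
        rw [← hn₁, ← hn₂, ← hx₁def, ← hx₂def]
        simp [mul_assoc]

end
end

section
/- The solution set in the unit cube [−1,1]³ of the system p₁(x,y,τ) = xy − √((1−x²)(1−y²))τ = 0 and 16y⁴ − 20y² + 16x²y² − 4x² + 3 = 0 is homeomorphic to a circle; explicitly it is the union of the two arcs parametrized by y ∈ [−√((5−√13)/8), √((5−√13)/8)], x = ±√(1 − y² − 1/(4−16y²)), τ = xy/√((1−x²)(1−y²)), which share exactly their two endpoints (0, ±√((5−√13)/8), 0). -/
noncomputable section

/-- The solution set `W₂` in the unit cube of the system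
`xy = √((1−x²)(1−y²))τ` and `16y⁴ − 20y² + 16x²y² − 4x² + 3 = 0`. -/
def W₂ : Set (ℝ × ℝ × ℝ) :=
  {w | |w.1| ≤ 1 ∧ |w.2.1| ≤ 1 ∧ |w.2.2| ≤ 1 ∧
    w.1 * w.2.1 = Real.sqrt ((1 - w.1 ^ 2) * (1 - w.2.1 ^ 2)) * w.2.2 ∧
    16 * w.2.1 ^ 4 - 20 * w.2.1 ^ 2 + 16 * w.1 ^ 2 * w.2.1 ^ 2 -
      4 * w.1 ^ 2 + 3 = 0}

/-- The endpoint bound `√((5−√13)/8)`. -/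
def yMax : ℝ := Real.sqrt ((5 - Real.sqrt 13) / 8)

/-- The positive-`x` branch `x = √(1 − y² − 1/(4−16y²))`. -/
def xBranch (y : ℝ) : ℝ := Real.sqrt (1 - y ^ 2 - 1 / (4 - 16 * y ^ 2))

/-- The value `τ = xy/√((1−x²)(1−y²))`. -/
def tauOf (x y : ℝ) : ℝ := x * y / Real.sqrt ((1 - x ^ 2) * (1 - y ^ 2))

/-- The arc of `W₂` with `x = √(1 − y² − 1/(4−16y²))`. -/
def arcPos : Set (ℝ × ℝ × ℝ) :=
  {w | ∃ y ∈ Set.Icc (-yMax) yMax, w = (xBranch y, y, tauOf (xBranch y) y)}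

/-- The arc of `W₂` with `x = −√(1 − y² − 1/(4−16y²))`. -/
def arcNeg : Set (ℝ × ℝ × ℝ) :=
  {w | ∃ y ∈ Set.Icc (-yMax) yMax, w = (-xBranch y, y, tauOf (-xBranch y) y)}

lemma sq13 : Real.sqrt 13 ^ 2 = 13 := Real.sq_sqrt (by norm_num)

lemma sqrt13_lt : Real.sqrt 13 < 4 := by
  nlinarith [sq13, Real.sqrt_nonneg 13]

lemma lt_sqrt13 : 3 < Real.sqrt 13 := by
  nlinarith [sq13, Real.sqrt_nonneg 13]

/-- Factorization of the quartic in `y`. -/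
lemma quart_factor (y : ℝ) :
    16 * y ^ 4 - 20 * y ^ 2 + 3 =
      16 * ((5 - Real.sqrt 13) / 8 - y ^ 2) * ((5 + Real.sqrt 13) / 8 - y ^ 2) := by
  have h := sq13
  nlinarith [h]

lemma yMax_sq : yMax ^ 2 = (5 - Real.sqrt 13) / 8 := by
  rw [yMax, Real.sq_sqrt]; linarith [sqrt13_lt]

lemma yMax_nonneg : 0 ≤ yMax := Real.sqrt_nonneg _

lemma denom_pos {y : ℝ} (hy : y ^ 2 ≤ (5 - Real.sqrt 13) / 8) : 0 < 4 - 16 * y ^ 2 := by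
  nlinarith [lt_sqrt13]

lemma E_nonneg {y : ℝ} (hy : y ^ 2 ≤ (5 - Real.sqrt 13) / 8) :
    0 ≤ 1 - y ^ 2 - 1 / (4 - 16 * y ^ 2) := by
  have hd := denom_pos hy
  have h2 : 0 ≤ 16 * y ^ 4 - 20 * y ^ 2 + 3 := by
    rw [quart_factor]
    have h13 := lt_sqrt13
    apply mul_nonneg (by nlinarith) (by nlinarith)
  have key : 1 - y ^ 2 - 1 / (4 - 16 * y ^ 2)
      = (16 * y ^ 4 - 20 * y ^ 2 + 3) / (4 - 16 * y ^ 2) := by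
    rw [eq_div_iff hd.ne', sub_mul, sub_mul, one_div, inv_mul_cancel₀ hd.ne']; ring
  rw [key]
  exact div_nonneg h2 hd.le


section part1
lemma mem_W2_of {x y : ℝ} (ht : x ^ 2 + y ^ 2 < 1)
    (heq : 16 * y ^ 4 - 20 * y ^ 2 + 16 * x ^ 2 * y ^ 2 - 4 * x ^ 2 + 3 = 0) :
    (x, y, tauOf x y) ∈ W₂ := by
  have hx2 : x ^ 2 < 1 := by nlinarith [sq_nonneg y]
  have hy2 : y ^ 2 < 1 := by nlinarith [sq_nonneg x]
  have hD : 0 < (1 - x ^ 2) * (1 - y ^ 2) := mul_pos (by linarith) (by linarith)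
  have hDs : 0 < Real.sqrt ((1 - x ^ 2) * (1 - y ^ 2)) := Real.sqrt_pos.mpr hD
  have hxy : (x * y) ^ 2 ≤ (1 - x ^ 2) * (1 - y ^ 2) := by nlinarith
  have habs : |x * y| ≤ Real.sqrt ((1 - x ^ 2) * (1 - y ^ 2)) := by
    rw [← Real.sqrt_sq_eq_abs]
    exact Real.sqrt_le_sqrt hxy
  refine ⟨?_, ?_, ?_, ?_, heq⟩
  · rw [abs_le]; constructor <;> nlinarith
  · rw [abs_le]; constructor <;> nlinarith
  · show |tauOf x y| ≤ 1
    rw [tauOf, abs_div, abs_of_pos hDs]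
    exact div_le_one_of_le₀ habs hDs.le
  · show x * y = _ * tauOf x y
    simp only [tauOf]
    rw [mul_comm (Real.sqrt _), div_mul_cancel₀ _ hDs.ne']
end part1

lemma w2_basic {x y τ : ℝ} (h : (x, y, τ) ∈ W₂) :
    x ^ 2 + y ^ 2 < 1 ∧ 0 < x ^ 2 + y ^ 2 ∧
      16 * y ^ 2 * ((x ^ 2 + y ^ 2) - 1) = 4 * (x ^ 2 + y ^ 2) - 3 ∧
      y ^ 2 ≤ (5 - Real.sqrt 13) / 8 ∧
      x ^ 2 = 1 - y ^ 2 - 1 / (4 - 16 * y ^ 2) ∧ τ = tauOf x y := by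
  obtain ⟨hx, hy, hτ, he1, he2⟩ := h
  simp only at hx hy hτ he1 he2
  have hx2 : x ^ 2 ≤ 1 := by have := abs_le.mp hx; nlinarith
  have hy2 : y ^ 2 ≤ 1 := by have := abs_le.mp hy; nlinarith
  have hτ2 : τ ^ 2 ≤ 1 := by have := abs_le.mp hτ; nlinarith
  have hD : 0 ≤ (1 - x ^ 2) * (1 - y ^ 2) := mul_nonneg (by linarith) (by linarith)
  have hsq : (x * y) ^ 2 = (1 - x ^ 2) * (1 - y ^ 2) * τ ^ 2 := by
    rw [he1, mul_pow, Real.sq_sqrt hD]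
  have h5 : (1 - x ^ 2) * (1 - y ^ 2) * τ ^ 2 ≤ (1 - x ^ 2) * (1 - y ^ 2) :=
    mul_le_of_le_one_right hD hτ2
  have hle : x ^ 2 + y ^ 2 ≤ 1 := by nlinarith
  have hq : 16 * y ^ 2 * ((x ^ 2 + y ^ 2) - 1) = 4 * (x ^ 2 + y ^ 2) - 3 := by
    linear_combination he2
  have hlt : x ^ 2 + y ^ 2 < 1 := by
    rcases eq_or_lt_of_le hle with he | h
    · exfalso
      have h01 : (0 : ℝ) = 1 := by linear_combination hq + (4 - 16 * y ^ 2) * he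
      norm_num at h01
    · exact h
  have hpos : 0 < x ^ 2 + y ^ 2 := by
    rcases (lt_or_eq_of_le (by positivity : (0:ℝ) ≤ x ^ 2 + y ^ 2)) with h | h
    · exact h
    · exfalso
      have hy0 : y ^ 2 = 0 := by nlinarith [sq_nonneg x, sq_nonneg y]
      have hx0 : x ^ 2 = 0 := by nlinarith [sq_nonneg x, sq_nonneg y]
      rw [hx0, hy0] at hq; norm_num at hq
  have hd1 : (1 - (x ^ 2 + y ^ 2)) * (4 - 16 * y ^ 2) = 1 := by linear_combination hq
  have hdpos : 0 < 4 - 16 * y ^ 2 := by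
    by_contra hc
    push_neg at hc
    nlinarith
  have hinv : 1 / (4 - 16 * y ^ 2) = 1 - (x ^ 2 + y ^ 2) := by
    field_simp
    linear_combination -hd1
  have hx2E : x ^ 2 = 1 - y ^ 2 - 1 / (4 - 16 * y ^ 2) := by rw [hinv]; ring
  have hfac : 16 * y ^ 4 - 20 * y ^ 2 + 3 = x ^ 2 * (4 - 16 * y ^ 2) := by
    linear_combination he2
  have hquart : 0 ≤ 16 * y ^ 4 - 20 * y ^ 2 + 3 :=
    hfac ▸ mul_nonneg (sq_nonneg x) hdpos.le
  have hyA : y ^ 2 ≤ (5 - Real.sqrt 13) / 8 := by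
    by_contra hc
    push_neg at hc
    have h2 : (0:ℝ) < (5 + Real.sqrt 13) / 8 - y ^ 2 := by linarith [lt_sqrt13]
    have hneg : 16 * ((5 - Real.sqrt 13) / 8 - y ^ 2) * ((5 + Real.sqrt 13) / 8 - y ^ 2) < 0 :=
      mul_neg_of_neg_of_pos (by linarith) h2
    linarith [quart_factor y]
  have hDpos : 0 < (1 - x ^ 2) * (1 - y ^ 2) := by nlinarith [sq_nonneg x, sq_nonneg y]
  have hDs : 0 < Real.sqrt ((1 - x ^ 2) * (1 - y ^ 2)) := Real.sqrt_pos.mpr hDpos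
  have hτeq : τ = tauOf x y := by
    rw [tauOf, he1, mul_comm, mul_div_assoc, div_self hDs.ne', mul_one]
  exact ⟨hlt, hpos, hq, hyA, hx2E, hτeq⟩

lemma sq_le_A_of_mem {y : ℝ} (hy : y ∈ Set.Icc (-yMax) yMax) :
    y ^ 2 ≤ (5 - Real.sqrt 13) / 8 := by
  have h := sq_le_sq' hy.1 hy.2
  rwa [yMax_sq] at h

lemma xBranch_sq {y : ℝ} (hy : y ^ 2 ≤ (5 - Real.sqrt 13) / 8) :
    xBranch y ^ 2 = 1 - y ^ 2 - 1 / (4 - 16 * y ^ 2) := Real.sq_sqrt (E_nonneg hy)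

lemma arc_mem {y : ℝ} (hy : y ^ 2 ≤ (5 - Real.sqrt 13) / 8) {x : ℝ}
    (hx : x ^ 2 = 1 - y ^ 2 - 1 / (4 - 16 * y ^ 2)) :
    (x, y, tauOf x y) ∈ W₂ := by
  have hd := denom_pos hy
  have hinv : 0 < 1 / (4 - 16 * y ^ 2) := by positivity
  have ht : x ^ 2 + y ^ 2 < 1 := by rw [hx]; linarith
  apply mem_W2_of ht
  have hd1 : (4 - 16 * y ^ 2) * (1 / (4 - 16 * y ^ 2)) = 1 := by field_simp
  linear_combination (16 * y ^ 2 - 4) * hx + hd1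

lemma W2_eq_union : W₂ = arcPos ∪ arcNeg := by
  ext ⟨x, y, τ⟩
  constructor
  · intro h
    obtain ⟨hlt, hpos, hq, hyA, hx2, hτ⟩ := w2_basic h
    have hyIcc : y ∈ Set.Icc (-yMax) yMax := by
      have h1 : |y| ≤ yMax := by
        rw [← Real.sqrt_sq_eq_abs, yMax]
        exact Real.sqrt_le_sqrt hyA
      exact abs_le.mp h1
    have habs : xBranch y = |x| := by
      rw [xBranch, ← hx2, Real.sqrt_sq_eq_abs]
    rcases le_or_gt 0 x with hx0 | hx0
    · left
      refine ⟨y, hyIcc, ?_⟩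
      have hxx : xBranch y = x := by rw [habs, abs_of_nonneg hx0]
      rw [hxx, ← hτ]
    · right
      refine ⟨y, hyIcc, ?_⟩
      have hxx : -xBranch y = x := by rw [habs, abs_of_neg hx0]; ring
      rw [hxx, ← hτ]
  · intro h
    rcases h with ⟨y', hy', heq⟩ | ⟨y', hy', heq⟩ <;> rw [heq]
    · exact arc_mem (sq_le_A_of_mem hy') (xBranch_sq (sq_le_A_of_mem hy'))
    · exact arc_mem (sq_le_A_of_mem hy')
        (by rw [neg_pow]; simpa using xBranch_sq (sq_le_A_of_mem hy'))

lemma E_yMax_zero :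
    1 - (5 - Real.sqrt 13) / 8 - 1 / (4 - 16 * ((5 - Real.sqrt 13) / 8)) = 0 := by
  have hd : (0:ℝ) < 4 - 16 * ((5 - Real.sqrt 13) / 8) := by linarith [lt_sqrt13]
  have h1 : 1 / (4 - 16 * ((5 - Real.sqrt 13) / 8)) = 1 - (5 - Real.sqrt 13) / 8 := by
    rw [div_eq_iff hd.ne']
    linear_combination (-1/4 : ℝ) * sq13
  rw [h1]; ring

lemma xBranch_zero_of {y : ℝ} (hy : y ^ 2 = (5 - Real.sqrt 13) / 8) : xBranch y = 0 := by
  rw [xBranch, hy, E_yMax_zero, Real.sqrt_zero]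

lemma tauOf_zero (y : ℝ) : tauOf 0 y = 0 := by simp [tauOf]

lemma inter_arcs : arcPos ∩ arcNeg = {(0, yMax, 0), (0, -yMax, 0)} := by
  ext ⟨x, y, τ⟩
  simp only [Set.mem_inter_iff, Set.mem_insert_iff, Set.mem_singleton_iff]
  constructor
  · rintro ⟨⟨y₁, hy₁, h₁⟩, ⟨y₂, hy₂, h₂⟩⟩
    simp only [arcPos, arcNeg, Prod.ext_iff] at h₁ h₂
    obtain ⟨hx1, hy1, hτ1⟩ := h₁
    obtain ⟨hx2, hy2, hτ2⟩ := h₂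
    subst hy1
    rw [← hy2] at hx2 hτ2
    have hxb0 : xBranch y = 0 := by
      have h0 : xBranch y = -xBranch y := hx1.symm.trans hx2
      linarith
    have hyA := sq_le_A_of_mem hy₁
    have hE0 : 1 - y ^ 2 - 1 / (4 - 16 * y ^ 2) = 0 :=
      (Real.sqrt_eq_zero (E_nonneg hyA)).mp hxb0
    have hd := denom_pos hyA
    have hd1 : (4 - 16 * y ^ 2) * (1 / (4 - 16 * y ^ 2)) = 1 := by field_simp
    have hq0 : 16 * y ^ 4 - 20 * y ^ 2 + 3 = 0 := by
      linear_combination (4 - 16 * y ^ 2) * hE0 + hd1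
    have hy2A : y ^ 2 = (5 - Real.sqrt 13) / 8 := by
      have h16 : (16:ℝ) * ((5 - Real.sqrt 13) / 8 - y ^ 2) *
          ((5 + Real.sqrt 13) / 8 - y ^ 2) = 0 := by
        linarith [quart_factor y]
      rcases mul_eq_zero.mp h16 with h | h
      · rcases mul_eq_zero.mp h with h' | h'
        · norm_num at h'
        · linarith
      · exfalso; nlinarith [lt_sqrt13]
    have hyy : y = yMax ∨ y = -yMax := by
      have habs : |y| = yMax := by
        rw [← Real.sqrt_sq_eq_abs, hy2A, yMax]
      exact (abs_eq yMax_nonneg).mp habs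
    have hx0 : x = 0 := by rw [hx1, hxb0]
    have hτ0 : τ = 0 := by rw [hτ1, hxb0, tauOf_zero]
    rcases hyy with h | h
    · left; rw [hx0, h, hτ0]
    · right; rw [hx0, h, hτ0]
  · have hup : xBranch yMax = 0 := xBranch_zero_of yMax_sq
    have hdn : xBranch (-yMax) = 0 := xBranch_zero_of (by rw [neg_pow]; simpa using yMax_sq)
    have hIu : yMax ∈ Set.Icc (-yMax) yMax := ⟨by linarith [yMax_nonneg], le_rfl⟩
    have hId : -yMax ∈ Set.Icc (-yMax) yMax := ⟨le_rfl, by linarith [yMax_nonneg]⟩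
    rintro (h | h) <;>
      (simp only [Prod.ext_iff] at h; obtain ⟨h1, h2, h3⟩ := h; subst h1; subst h2; subst h3)
    · exact ⟨⟨yMax, hIu, by rw [hup, tauOf_zero]⟩,
        ⟨yMax, hIu, by rw [hup]; norm_num [tauOf_zero]⟩⟩
    · exact ⟨⟨-yMax, hId, by rw [hdn, tauOf_zero]⟩,
        ⟨-yMax, hId, by rw [hdn]; norm_num [tauOf_zero]⟩⟩

section part3

lemma normsq_xyI (x y : ℝ) : ‖(x + y * Complex.I : ℂ)‖ ^ 2 = x ^ 2 + y ^ 2 := by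
  rw [Complex.sq_norm, Complex.normSq_apply]
  simp
  ring

lemma xyI_ne_zero {x y : ℝ} (h : 0 < x ^ 2 + y ^ 2) : (x + y * Complex.I : ℂ) ≠ 0 := by
  intro h0
  have h1 := normsq_xyI x y
  rw [h0] at h1
  simp at h1
  linarith

lemma isCompact_W2 : IsCompact W₂ := by
  have hclosed : IsClosed W₂ := by
    have h1 : IsClosed {w : ℝ × ℝ × ℝ | |w.1| ≤ 1} :=
      isClosed_le (by fun_prop) continuous_const
    have h2 : IsClosed {w : ℝ × ℝ × ℝ | |w.2.1| ≤ 1} :=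
      isClosed_le (by fun_prop) continuous_const
    have h3 : IsClosed {w : ℝ × ℝ × ℝ | |w.2.2| ≤ 1} :=
      isClosed_le (by fun_prop) continuous_const
    have h4 : IsClosed {w : ℝ × ℝ × ℝ |
        w.1 * w.2.1 = Real.sqrt ((1 - w.1 ^ 2) * (1 - w.2.1 ^ 2)) * w.2.2} := by
      apply isClosed_eq (by fun_prop)
      exact ((Real.continuous_sqrt.comp (by fun_prop)).mul (by fun_prop))
    have h5 : IsClosed {w : ℝ × ℝ × ℝ |
        16 * w.2.1 ^ 4 - 20 * w.2.1 ^ 2 + 16 * w.1 ^ 2 * w.2.1 ^ 2 - 4 * w.1 ^ 2 + 3 = 0} :=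
      isClosed_eq (by fun_prop) continuous_const
    have : W₂ = {w : ℝ × ℝ × ℝ | |w.1| ≤ 1} ∩ {w | |w.2.1| ≤ 1} ∩ {w | |w.2.2| ≤ 1} ∩
        {w | w.1 * w.2.1 = Real.sqrt ((1 - w.1 ^ 2) * (1 - w.2.1 ^ 2)) * w.2.2} ∩
        {w | 16 * w.2.1 ^ 4 - 20 * w.2.1 ^ 2 + 16 * w.1 ^ 2 * w.2.1 ^ 2 - 4 * w.1 ^ 2 + 3 = 0} := by
      ext w
      simp only [W₂, Set.mem_setOf_eq, Set.mem_inter_iff]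
      tauto
    rw [this]
    exact ((((h1.inter h2).inter h3).inter h4).inter h5)
  apply IsCompact.of_isClosed_subset (isCompact_Icc
    (a := ((-1 : ℝ), (-1 : ℝ), (-1 : ℝ))) (b := ((1 : ℝ), (1 : ℝ), (1 : ℝ)))) hclosed
  rintro ⟨x, y, τ⟩ ⟨hx, hy, hτ, -, -⟩
  simp only at hx hy hτ
  obtain ⟨hx1, hx2⟩ := abs_le.mp hx
  obtain ⟨hy1, hy2⟩ := abs_le.mp hy
  obtain ⟨hτ1, hτ2⟩ := abs_le.mp hτ
  exact ⟨⟨hx1, hy1, hτ1⟩, ⟨hx2, hy2, hτ2⟩⟩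

end part3

lemma part3 : Nonempty (W₂ ≃ₜ Circle) := by
  haveI : CompactSpace ↥W₂ := isCompact_iff_compactSpace.mp isCompact_W2
  set g : ↥W₂ → ℂ := fun w =>
    (w.val.1 + w.val.2.1 * Complex.I) / ((‖(w.val.1 + w.val.2.1 * Complex.I : ℂ)‖ : ℝ) : ℂ)
    with hg
  have hpos : ∀ w : ↥W₂, 0 < w.val.1 ^ 2 + w.val.2.1 ^ 2 := by
    rintro ⟨⟨x, y, τ⟩, hw⟩
    exact (w2_basic hw).2.1
  have hne : ∀ w : ↥W₂, (w.val.1 + w.val.2.1 * Complex.I : ℂ) ≠ 0 :=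
    fun w => xyI_ne_zero (hpos w)
  have hnorm_ne : ∀ w : ↥W₂, (‖(w.val.1 + w.val.2.1 * Complex.I : ℂ)‖ : ℝ) ≠ 0 :=
    fun w => norm_ne_zero_iff.mpr (hne w)
  have hmem : ∀ w : ↥W₂, g w ∈ Submonoid.unitSphere ℂ := by
    intro w
    show g w ∈ Metric.sphere (0:ℂ) 1
    rw [mem_sphere_zero_iff_norm, hg]
    simp only [norm_div, Complex.norm_real, Real.norm_eq_abs, abs_norm]
    rw [div_self (hnorm_ne w)]
  set f : ↥W₂ → Circle := fun w => ⟨g w, hmem w⟩ with hf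
  have hcont : Continuous f := by
    apply Continuous.subtype_mk
    apply Continuous.div
    · fun_prop
    · fun_prop
    · exact fun w => Complex.ofReal_ne_zero.mpr (hnorm_ne w)
  have hinj : Function.Injective f := by
    rintro ⟨⟨x₁, y₁, τ₁⟩, h₁⟩ ⟨⟨x₂, y₂, τ₂⟩, h₂⟩ hf12
    obtain ⟨hlt₁, hpos₁, hq₁, -, -, hτ₁⟩ := w2_basic h₁
    obtain ⟨hlt₂, hpos₂, hq₂, -, -, hτ₂⟩ := w2_basic h₂
    have hzne₁ : ((x₁ : ℂ) + y₁ * Complex.I) ≠ 0 := xyI_ne_zero hpos₁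
    have hzne₂ : ((x₂ : ℂ) + y₂ * Complex.I) ≠ 0 := xyI_ne_zero hpos₂
    have hr₁ : (0:ℝ) < ‖((x₁ : ℂ) + y₁ * Complex.I)‖ := norm_pos_iff.mpr hzne₁
    have hr₂ : (0:ℝ) < ‖((x₂ : ℂ) + y₂ * Complex.I)‖ := norm_pos_iff.mpr hzne₂
    have h0 : ((x₁ : ℂ) + y₁ * Complex.I) / ((‖((x₁ : ℂ) + y₁ * Complex.I)‖ : ℝ) : ℂ)
        = ((x₂ : ℂ) + y₂ * Complex.I) / ((‖((x₂ : ℂ) + y₂ * Complex.I)‖ : ℝ) : ℂ) :=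
      Subtype.ext_iff.mp hf12
    rw [div_eq_div_iff (Complex.ofReal_ne_zero.mpr hr₁.ne')
      (Complex.ofReal_ne_zero.mpr hr₂.ne')] at h0
    have hre := congrArg Complex.re h0
    have him := congrArg Complex.im h0
    simp [Complex.add_re, Complex.add_im, Complex.mul_re, Complex.mul_im] at hre him
    have ht₁ := normsq_xyI x₁ y₁
    have ht₂ := normsq_xyI x₂ y₂
    have hyt : y₁ ^ 2 * (x₂ ^ 2 + y₂ ^ 2) = y₂ ^ 2 * (x₁ ^ 2 + y₁ ^ 2) := by
      have h3 := congrArg (· ^ 2) him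
      simp only [mul_pow] at h3
      rw [ht₁, ht₂] at h3
      exact h3
    have key2 : ((x₂ ^ 2 + y₂ ^ 2) - (x₁ ^ 2 + y₁ ^ 2)) *
        (4 * (x₁ ^ 2 + y₁ ^ 2) * (x₂ ^ 2 + y₂ ^ 2) - 3 * (x₁ ^ 2 + y₁ ^ 2)
          - 3 * (x₂ ^ 2 + y₂ ^ 2) + 3) = 0 := by
      linear_combination (-(x₂ ^ 2 + y₂ ^ 2) * ((x₂ ^ 2 + y₂ ^ 2) - 1)) * hq₁
        + ((x₁ ^ 2 + y₁ ^ 2) * ((x₁ ^ 2 + y₁ ^ 2) - 1)) * hq₂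
        + (16 * ((x₁ ^ 2 + y₁ ^ 2) - 1) * ((x₂ ^ 2 + y₂ ^ 2) - 1)) * hyt
    have hfpos : 0 < 4 * (x₁ ^ 2 + y₁ ^ 2) * (x₂ ^ 2 + y₂ ^ 2) - 3 * (x₁ ^ 2 + y₁ ^ 2)
        - 3 * (x₂ ^ 2 + y₂ ^ 2) + 3 := by
      nlinarith [mul_pos (sub_pos.mpr hlt₁) (sub_pos.mpr hlt₂), mul_pos hpos₁ hpos₂]
    have hteq : x₁ ^ 2 + y₁ ^ 2 = x₂ ^ 2 + y₂ ^ 2 := by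
      rcases mul_eq_zero.mp key2 with h | h
      · linarith
      · linarith
    have hrr : ‖((x₁ : ℂ) + y₁ * Complex.I)‖ = ‖((x₂ : ℂ) + y₂ * Complex.I)‖ := by
      have hsq : ‖((x₁ : ℂ) + y₁ * Complex.I)‖ ^ 2 = ‖((x₂ : ℂ) + y₂ * Complex.I)‖ ^ 2 := by
        rw [ht₁, ht₂, hteq]
      nlinarith [hr₁, hr₂, sq_nonneg (‖((x₁ : ℂ) + y₁ * Complex.I)‖ - ‖((x₂ : ℂ) + y₂ * Complex.I)‖)]
    rw [hrr] at hre him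
    have hx12 : x₁ = x₂ := mul_right_cancel₀ hr₂.ne' hre
    have hy12 : y₁ = y₂ := mul_right_cancel₀ hr₂.ne' him
    have hτ12 : τ₁ = τ₂ := by rw [hτ₁, hτ₂, hx12, hy12]
    exact Subtype.ext (show (x₁, y₁, τ₁) = (x₂, y₂, τ₂) by rw [hx12, hy12, hτ12])
  have hsurj : Function.Surjective f := by
    rintro ⟨z, hz⟩
    have hnorm : ‖z‖ = 1 := mem_sphere_zero_iff_norm.mp hz
    set c : ℝ := z.re with hc
    set s : ℝ := z.im with hs
    have hcs : c ^ 2 + s ^ 2 = 1 := by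
      have h1 : ‖z‖ ^ 2 = c ^ 2 + s ^ 2 := by
        rw [Complex.sq_norm, Complex.normSq_apply]; ring
      rw [hnorm] at h1; linarith
    obtain ⟨t, htI, hqt⟩ : ∃ t ∈ Set.Icc (0:ℝ) 1,
        16 * s ^ 2 * t ^ 2 - 16 * s ^ 2 * t - 4 * t + 3 = 0 := by
      have hcont : ContinuousOn (fun t : ℝ => 16 * s ^ 2 * t ^ 2 - 16 * s ^ 2 * t - 4 * t + 3)
          (Set.Icc 0 1) := by fun_prop
      have himg := intermediate_value_Icc' (by norm_num : (0:ℝ) ≤ 1) hcont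
      have h0 : (0:ℝ) ∈ Set.Icc (16 * s ^ 2 * 1 ^ 2 - 16 * s ^ 2 * 1 - 4 * 1 + 3)
          (16 * s ^ 2 * 0 ^ 2 - 16 * s ^ 2 * 0 - 4 * 0 + 3) := by
        constructor <;> norm_num
      obtain ⟨t, htI, hqt⟩ := himg h0
      exact ⟨t, htI, hqt⟩
    have ht0 : 0 < t := by
      rcases lt_or_eq_of_le htI.1 with h | h
      · exact h
      · exfalso; rw [← h] at hqt; norm_num at hqt
    have ht1 : t < 1 := by
      rcases lt_or_eq_of_le htI.2 with h | h
      · exact h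
      · exfalso; rw [h] at hqt; ring_nf at hqt; linarith
    set x : ℝ := c * Real.sqrt t with hx
    set y : ℝ := s * Real.sqrt t with hy
    have hst : Real.sqrt t ^ 2 = t := Real.sq_sqrt ht0.le
    have hx2 : x ^ 2 = c ^ 2 * t := by rw [hx, mul_pow, hst]
    have hy2 : y ^ 2 = s ^ 2 * t := by rw [hy, mul_pow, hst]
    have hxyt : x ^ 2 + y ^ 2 = t := by
      rw [hx2, hy2]; linear_combination t * hcs
    have hlt : x ^ 2 + y ^ 2 < 1 := by rw [hxyt]; exact ht1
    have heq : 16 * y ^ 4 - 20 * y ^ 2 + 16 * x ^ 2 * y ^ 2 - 4 * x ^ 2 + 3 = 0 := by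
      have hy4 : y ^ 4 = (s ^ 2 * t) ^ 2 := by rw [show y ^ 4 = (y ^ 2) ^ 2 by ring, hy2]
      rw [show (16:ℝ) * y ^ 4 - 20 * y ^ 2 + 16 * x ^ 2 * y ^ 2 - 4 * x ^ 2 + 3
          = 16 * (y ^ 2) ^ 2 - 20 * y ^ 2 + 16 * x ^ 2 * y ^ 2 - 4 * x ^ 2 + 3 by ring,
        hx2, hy2]
      linear_combination hqt + (16 * s ^ 2 * t ^ 2 - 4 * t) * hcs
    have hw : (x, y, tauOf x y) ∈ W₂ := mem_W2_of hlt heq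
    refine ⟨⟨(x, y, tauOf x y), hw⟩, ?_⟩
    apply Subtype.ext
    show ((x : ℂ) + y * Complex.I) / ((‖((x : ℂ) + y * Complex.I)‖ : ℝ) : ℂ) = z
    have hzeq : ((x : ℂ) + y * Complex.I) = (Real.sqrt t : ℂ) * z := by
      rw [← Complex.re_add_im z]
      push_cast [hx, hy]
      ring
    have hsp : (0:ℝ) < Real.sqrt t := Real.sqrt_pos.mpr ht0
    rw [hzeq]
    rw [norm_mul, Complex.norm_real, Real.norm_eq_abs, abs_of_pos hsp, hnorm, mul_one]
    rw [mul_comm, mul_div_assoc, div_self (Complex.ofReal_ne_zero.mpr hsp.ne'), mul_one]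
  exact ⟨Continuous.homeoOfEquivCompactToT2 (f := Equiv.ofBijective f ⟨hinj, hsurj⟩) hcont⟩

/-- `W₂` is the union of the two arcs, the arcs meet exactly in their common
endpoints `(0, ±√((5−√13)/8), 0)`, and `W₂` is homeomorphic to a circle. -/
theorem W₂_is_a_circle :
    W₂ = arcPos ∪ arcNeg ∧
    arcPos ∩ arcNeg = {(0, yMax, 0), (0, -yMax, 0)} ∧
    Nonempty (W₂ ≃ₜ Circle) := ⟨W2_eq_union, inter_arcs, part3⟩

end
end
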